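/- (Second duality theorem.) Let λ, μ be partitions of length l with l ≥ |μ| ≥ |λ|, set m = max(λ_1, μ_1) and regard the conjugate partitions λ′, μ′ as partitions of length m; set n = max(λ′_1, μ′_1), λ̃ = (n−λ′_m, …, n−λ′_1) and μ̃ = (n−μ′_m, …, n−μ′_1). Then for any integer k ≥ (|μ|−|λ|)/2: v_{λ,μ}(q) = K^{D_m}_{λ̃+kκ_m, μ̃+kκ_m}(q) and V_{λ,μ}(q) = K^{C_m}_{λ̃+kκ_m, μ̃+kκ_m}(q), where v_{λ,μ}(q) = u_{λ′,μ′}(q) and V_{λ,μ}(q) = U_{λ′,μ′}(q), computed in rank m. -/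

import Mathlib

open scoped BigOperators

noncomputable section

/-- Integral weights of rank `m`, identified with `ℤ^m`. -/
abbrev Wt (m : ℕ) := Fin m → ℤ

/-- Rational weights of rank `m` (needed for the half-integral `ρ` of type `B`). -/
abbrev QWt (m : ℕ) := Fin m → ℚ

/-- Coercion of an integral weight to a rational weight. -/
def castWt {m : ℕ} (β : Wt m) : QWt m := fun i => (β i : ℚ)

/-- The standard basis vector `ε_i` of `ℤ^m`. -/
def eps {m : ℕ} (i : Fin m) : Wt m := fun j => if j = i then 1 else 0

/-- `ρ_m = (m, m-1, ..., 1)`. -/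
def rhoZ (m : ℕ) : Wt m := fun i => (m : ℤ) - (i : ℕ)

/-- `κ_m = (1, ..., 1)`. -/
def kappa (m : ℕ) : Wt m := fun _ => 1

/-- A partition of length `m`: a weakly decreasing element of `ℕ^m` (written in `ℤ^m`). -/
def IsPart {m : ℕ} (lam : Wt m) : Prop := Antitone lam ∧ ∀ i, 0 ≤ lam i

/-- `|λ| = λ_1 + ⋯ + λ_m`. -/
def wtSum {m : ℕ} (lam : Wt m) : ℤ := ∑ i, lam i

/-- The conjugate partition, regarded as a partition of length `n`:
`λ'_j = #{i : λ_i ≥ j}` (with `j` one-based). -/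
def conj {m : ℕ} (n : ℕ) (lam : Wt m) : Wt n :=
  fun j => ((Finset.univ.filter (fun i : Fin m => ((j : ℕ) : ℤ) < lam i)).card : ℤ)

/-- The permutation action of `S_m` on `ℤ^m`. -/
def pact {m : ℕ} (σ : Equiv.Perm (Fin m)) (β : Wt m) : Wt m := β ∘ σ.symm

/-- The permutation action of `S_m` on `ℚ^m`. -/
def qpact {m : ℕ} (σ : Equiv.Perm (Fin m)) (β : QWt m) : QWt m := β ∘ σ.symm

/-- The dot action `σ ∘ α = σ(α + ρ_m) - ρ_m`. -/
def dotAct {m : ℕ} (σ : Equiv.Perm (Fin m)) (α : Wt m) : Wt m :=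
  pact σ (α + rhoZ m) - rhoZ m

/-- The three root-system types considered in the paper. -/
inductive RT | B | C | D
deriving DecidableEq

/-- The action of a signed permutation `(σ, ε)` on `ℚ^m`: the hyperoctahedral group
`W_{B_m} = W_{C_m}` consists of all such pairs. -/
def sact {m : ℕ} (σ : Equiv.Perm (Fin m)) (ε : Fin m → Bool) (β : QWt m) : QWt m :=
  fun i => (if ε i then -1 else 1) * β (σ.symm i)

/-- `(-1)^{l(w)}` for a signed permutation `w = (σ, ε)`: the sign character of the
hyperoctahedral group, which takes value `-1` on each Coxeter generator. -/
def ssign {m : ℕ} (σ : Equiv.Perm (Fin m)) (ε : Fin m → Bool) : ℤ :=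
  (Equiv.Perm.sign σ : ℤ) * ∏ i, (if ε i then -1 else 1)

/-- Which signed permutations belong to the Weyl group of type `g`: for `B` and `C` all of
them, for `D` only those changing an even number of signs. -/
def allowed (g : RT) {m : ℕ} (ε : Fin m → Bool) : Prop :=
  g = RT.D → (∏ i, (if ε i then (-1 : ℤ) else 1)) = 1

instance (g : RT) {m : ℕ} : DecidablePred (allowed g (m := m)) := by
  unfold allowed; infer_instance

/-- The Laurent polynomial ring `ℤ[x_1^{±1/2}, ..., x_m^{±1/2}]` (allowing all rational
exponents), realized as the group algebra of `ℚ^m`. -/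
abbrev LQ (m : ℕ) := AddMonoidAlgebra ℤ (QWt m)

/-- The monomial `x^β`. -/
def XQ {m : ℕ} (β : QWt m) : LQ m := AddMonoidAlgebra.single β 1

instance {m : ℕ} : IsDomain (LQ m) := NoZeroDivisors.to_isDomain _

/-- The fraction field of the Laurent polynomial ring, in which Schur functions live. -/
abbrev KK (m : ℕ) := FractionRing (LQ m)

def toK {m : ℕ} (p : LQ m) : KK m := algebraMap (LQ m) (KK m) p

/-- The half-sum of positive roots: `ρ_B = ρ_m - (1/2,…,1/2)`, `ρ_C = ρ_m`,
`ρ_D = ρ_m - (1,…,1)`. -/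
def rhoG (g : RT) (m : ℕ) : QWt m :=
  match g with
  | RT.B => fun i => ((m : ℚ) - (i : ℕ)) - 1/2
  | RT.C => fun i => (m : ℚ) - (i : ℕ)
  | RT.D => fun i => ((m : ℚ) - (i : ℕ)) - 1

/-- `a_β = Σ_{w ∈ W_g} (-1)^{l(w)} x^{w(β)}`. -/
def aalt (g : RT) {m : ℕ} (β : QWt m) : LQ m :=
  ∑ σ : Equiv.Perm (Fin m), ∑ ε ∈ Finset.univ.filter (allowed g),
    ssign σ ε • XQ (sact σ ε β)

/-- The Schur function `s_ν^g = a_{ν+ρ_g} / a_{ρ_g}`. -/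
def SchurF (g : RT) {m : ℕ} (ν : QWt m) : KK m :=
  toK (aalt g (ν + rhoG g m)) / toK (aalt g (rhoG g m))

/-- The one-row weight `(k, 0, …, 0)`. -/
def rowWt (m : ℕ) (k : ℤ) : QWt m := fun i => if (i : ℕ) = 0 then (k : ℚ) else 0

/-- The one-column weight `(1^p, 0^{m-p})`. -/
def colWt (m : ℕ) (p : ℤ) : QWt m := fun i => if ((i : ℕ) : ℤ) < p then 1 else 0

/-- `h_k^g = s_{(k,0,…,0)}^g` for `k ≥ 0`, and `0` for `k < 0`. -/
def hF (g : RT) (m : ℕ) (k : ℤ) : KK m := if 0 ≤ k then SchurF g (rowWt m k) else 0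

/-- `H_k^g = h_k^g + h_{k-2}^g + ⋯ + h_{k mod 2}^g` for `k ≥ 0`, and `0` for `k < 0`. -/
def HF (g : RT) (m : ℕ) (k : ℤ) : KK m :=
  if 0 ≤ k then ∑ j ∈ Finset.range (k.toNat / 2 + 1), hF g m (k - 2 * j) else 0

/-- `e_p^g = s^g_{(1^p,0^{m-p})}` for `0 ≤ p ≤ m`, `e_p^g = e^g_{2m-p}` for `m < p ≤ 2m`,
and `0` otherwise. -/
def eF (g : RT) (m : ℕ) (p : ℤ) : KK m :=
  if 0 ≤ p ∧ p ≤ (m : ℤ) then SchurF g (colWt m p)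
  else if (m : ℤ) < p ∧ p ≤ 2 * m then SchurF g (colWt m (2 * m - p))
  else 0

/-- `E_k^g = e_k^g + e_{k-2}^g + ⋯ + e_{k mod 2}^g` for `k ≥ 0`, and `0` for `k < 0`. -/
def EF (g : RT) (m : ℕ) (k : ℤ) : KK m :=
  if 0 ≤ k then ∑ j ∈ Finset.range (k.toNat / 2 + 1), eF g m (k - 2 * j) else 0

/-- The `m × m` determinant `u_α^g` (in the one-row characters `h^g`). -/
def uDet (g : RT) {m : ℕ} (α : Wt m) : KK m :=
  Matrix.det (Matrix.of fun i j : Fin m =>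
    if (j : ℕ) = 0 then hF g m (α i - (i : ℕ))
    else hF g m (α i - (i : ℕ) + (j : ℕ)) + hF g m (α i - (i : ℕ) - (j : ℕ)))

/-- The `n × n` determinant `v_β^g` (in the one-column characters `e^g` of rank `m`). -/
def vDet (g : RT) (m : ℕ) {n : ℕ} (β : Wt n) : KK m :=
  Matrix.det (Matrix.of fun i j : Fin n =>
    if (j : ℕ) = 0 then eF g m (β i - (i : ℕ))
    else eF g m (β i - (i : ℕ) + (j : ℕ)) + eF g m (β i - (i : ℕ) - (j : ℕ)))

/-- `h_α^g = h^g_{α_1} ⋯ h^g_{α_m}` (and similarly for arbitrary index length). -/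
def hProd (g : RT) (m : ℕ) {n : ℕ} (α : Wt n) : KK m := ∏ i, hF g m (α i)

def HProd (g : RT) (m : ℕ) {n : ℕ} (α : Wt n) : KK m := ∏ i, HF g m (α i)

def eProd (g : RT) (m : ℕ) {n : ℕ} (α : Wt n) : KK m := ∏ i, eF g m (α i)

def EProd (g : RT) (m : ℕ) {n : ℕ} (α : Wt n) : KK m := ∏ i, EF g m (α i)

/-- The Laurent polynomial ring `ℤ[x_1^{±1}, ..., x_m^{±1}]`, realized as the group
algebra of `ℤ^m`. -/
abbrev LZ (m : ℕ) := AddMonoidAlgebra ℤ (Wt m)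

/-- The monomial `x^β`. -/
def XZ {m : ℕ} (β : Wt m) : LZ m := AddMonoidAlgebra.single β 1

/-- `φ_m = ∏_{1≤i<j≤m} (1 - x_i/x_j) · ∏_{1≤r<s≤m} (1 - 1/(x_r x_s))`; its coefficients
are the function `a` (resp. `f_{q=1}` up to expansion conventions). -/
def phiSmall (m : ℕ) : LZ m :=
  (∏ p ∈ Finset.univ.filter (fun p : Fin m × Fin m => p.1 < p.2),
      (1 - XZ (eps p.1 - eps p.2))) *
  (∏ p ∈ Finset.univ.filter (fun p : Fin m × Fin m => p.1 < p.2),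
      (1 - XZ (-(eps p.1 + eps p.2))))

/-- `Φ_m = ∏_{1≤i<j≤m} (1 - x_i/x_j) · ∏_{1≤r≤s≤m} (1 - 1/(x_r x_s))`. -/
def phiBig (m : ℕ) : LZ m :=
  (∏ p ∈ Finset.univ.filter (fun p : Fin m × Fin m => p.1 < p.2),
      (1 - XZ (eps p.1 - eps p.2))) *
  (∏ p ∈ Finset.univ.filter (fun p : Fin m × Fin m => p.1 ≤ p.2),
      (1 - XZ (-(eps p.1 + eps p.2))))

/-- The coefficient `a(γ)` of `x^γ` in `φ_m`. -/
def coeffSmall (m : ℕ) (γ : Wt m) : ℤ := (phiSmall m).coeff γ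

/-- The coefficient `A(γ)` of `x^γ` in `Φ_m`. -/
def coeffBig (m : ℕ) (γ : Wt m) : ℤ := (phiBig m).coeff γ

/-- The generic `q`-partition function attached to a finite family `v` of vectors:
the coefficient of `q^d` counts the families `(n_i)` of nonnegative integers with
`Σ n_i = d` and `Σ n_i v_i = β`.  This encodes the coefficient of `x^β` in the formal
series expansion of `∏_i (1 - q x^{v_i})^{-1}` as a power series in `q`. -/
def PqPS {m : ℕ} {ι : Type} [Fintype ι] (v : ι → Wt m) (β : QWt m) : PowerSeries ℤ :=
  PowerSeries.mk fun d =>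
    (Nat.card {n : ι → ℕ // (∑ i, n i) = d ∧ castWt (∑ i, (n i : ℤ) • v i) = β} : ℤ)

/-- The specialization at `q = 1` of `PqPS`: the number of ways to write `β` as a
nonnegative integral combination of the vectors `v_i`. -/
def POne {m : ℕ} {ι : Type} [Fintype ι] (v : ι → Wt m) (β : Wt m) : ℤ :=
  (Nat.card {n : ι → ℕ // (∑ i, (n i : ℤ) • v i) = β} : ℤ)

/-- Index type for the pairs `1 ≤ i < j ≤ m`. -/
abbrev IdxLT (m : ℕ) := {p : Fin m × Fin m // p.1 < p.2}

/-- Index type for the pairs `1 ≤ i ≤ j ≤ m`. -/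
abbrev IdxLE (m : ℕ) := {p : Fin m × Fin m // p.1 ≤ p.2}

/-- The positive roots `ε_i - ε_j` (`i < j`) of type `A_m`. -/
def rootsA (m : ℕ) : IdxLT m → Wt m := fun p => eps p.1.1 - eps p.1.2

/-- The positive roots of type `B_m`. -/
def rootsB (m : ℕ) : IdxLT m ⊕ IdxLT m ⊕ Fin m → Wt m
  | .inl p => eps p.1.1 - eps p.1.2
  | .inr (.inl p) => eps p.1.1 + eps p.1.2
  | .inr (.inr i) => eps i

/-- The positive roots of type `C_m` (note `2ε_i = ε_i + ε_i`). -/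
def rootsC (m : ℕ) : IdxLT m ⊕ IdxLE m → Wt m
  | .inl p => eps p.1.1 - eps p.1.2
  | .inr p => eps p.1.1 + eps p.1.2

/-- The positive roots of type `D_m`. -/
def rootsD (m : ℕ) : IdxLT m ⊕ IdxLT m → Wt m
  | .inl p => eps p.1.1 - eps p.1.2
  | .inr p => eps p.1.1 + eps p.1.2

/-- The vectors `ε_i - ε_j` (`i < j`) and `-(ε_r + ε_s)` (`r < s`), whose `q`-partition
function is `f_q`. -/
def vfSmall (m : ℕ) : IdxLT m ⊕ IdxLT m → Wt m
  | .inl p => eps p.1.1 - eps p.1.2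
  | .inr p => -(eps p.1.1 + eps p.1.2)

/-- The vectors `ε_i - ε_j` (`i < j`) and `-(ε_r + ε_s)` (`r ≤ s`), whose `q`-partition
function is `F_q`. -/
def vfBig (m : ℕ) : IdxLT m ⊕ IdxLE m → Wt m
  | .inl p => eps p.1.1 - eps p.1.2
  | .inr p => -(eps p.1.1 + eps p.1.2)

/-- `f_q`. -/
def fq {m : ℕ} (β : Wt m) : PowerSeries ℤ := PqPS (vfSmall m) (castWt β)

/-- `F_q`. -/
def Fq {m : ℕ} (β : Wt m) : PowerSeries ℤ := PqPS (vfBig m) (castWt β)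

/-- The `q`-analogue of Kostant's partition function, type `A_m`. -/
def PqA {m : ℕ} (β : QWt m) : PowerSeries ℤ := PqPS (rootsA m) β

/-- The `q`-analogue of Kostant's partition function, types `B_m`, `C_m`, `D_m`. -/
def PqG (g : RT) {m : ℕ} (β : QWt m) : PowerSeries ℤ :=
  match g with
  | RT.B => PqPS (rootsB m) β
  | RT.C => PqPS (rootsC m) β
  | RT.D => PqPS (rootsD m) β

/-- The Kostka–Foulkes polynomial
`K^g_{λ,μ}(q) = Σ_{w ∈ W_g} (-1)^{l(w)} P_q^g(w(λ+ρ_g) - (μ+ρ_g))`. -/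
def KF (g : RT) {m : ℕ} (lam mu : QWt m) : PowerSeries ℤ :=
  ∑ σ : Equiv.Perm (Fin m), ∑ ε ∈ Finset.univ.filter (allowed g),
    ssign σ ε • PqG g (sact σ ε (lam + rhoG g m) - (mu + rhoG g m))

/-- The Kostka–Foulkes polynomial of type `A_m`,
`K^{A_m}_{λ,γ}(q) = Σ_{σ ∈ S_m} (-1)^{l(σ)} P_q^{A_m}(σ(λ+ρ_m) - (γ+ρ_m))`,
defined for arbitrary `γ ∈ ℤ^m`. -/
def KFA {m : ℕ} (lam gamma : Wt m) : PowerSeries ℤ :=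
  ∑ σ : Equiv.Perm (Fin m),
    (Equiv.Perm.sign σ : ℤ) • PqA (castWt (pact σ (lam + rhoZ m) - (gamma + rhoZ m)))

/-- `u_{λ,μ}(q) = Σ_{σ ∈ S_m} (-1)^{l(σ)} f_q(σ(λ+ρ_m) - μ - ρ_m)`. -/
def uP {m : ℕ} (lam mu : Wt m) : PowerSeries ℤ :=
  ∑ σ : Equiv.Perm (Fin m),
    (Equiv.Perm.sign σ : ℤ) • fq (pact σ (lam + rhoZ m) - mu - rhoZ m)

/-- `U_{λ,μ}(q) = Σ_{σ ∈ S_m} (-1)^{l(σ)} F_q(σ(λ+ρ_m) - μ - ρ_m)`. -/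
def UP {m : ℕ} (lam mu : Wt m) : PowerSeries ℤ :=
  ∑ σ : Equiv.Perm (Fin m),
    (Equiv.Perm.sign σ : ℤ) • Fq (pact σ (lam + rhoZ m) - mu - rhoZ m)

/-- `f_q` specialized at `q = 1`. -/
def fOne {m : ℕ} (β : Wt m) : ℤ := POne (vfSmall m) β

/-- `F_q` specialized at `q = 1`. -/
def FOne {m : ℕ} (β : Wt m) : ℤ := POne (vfBig m) β

/-- `u_{λ,μ}(1)`. -/
def uP1 {m : ℕ} (lam mu : Wt m) : ℤ :=
  ∑ σ : Equiv.Perm (Fin m),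
    (Equiv.Perm.sign σ : ℤ) * fOne (pact σ (lam + rhoZ m) - mu - rhoZ m)

/-- `U_{λ,μ}(1)`. -/
def UP1 {m : ℕ} (lam mu : Wt m) : ℤ :=
  ∑ σ : Equiv.Perm (Fin m),
    (Equiv.Perm.sign σ : ℤ) * FOne (pact σ (lam + rhoZ m) - mu - rhoZ m)

/-- `λ̂ = (n - λ_m, …, n - λ_1)`. -/
def hatP {m : ℕ} (n : ℤ) (lam : Wt m) : Wt m := fun i => n - lam i.rev

/-- The involution `I(α_1, …, α_m) = (-α_m, …, -α_1)`. -/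
def invI {m : ℕ} (α : Wt m) : Wt m := fun i => -α i.rev

/-- `σ*`, defined by `σ*(k) = σ(m - k + 1)`. -/
def starPerm {m : ℕ} (σ : Equiv.Perm (Fin m)) : Equiv.Perm (Fin m) :=
  (Fin.revPerm).trans σ

/-- The number of ways to write `β = Σ_{1≤r≤s≤m} e_{r,s} (ε_r + ε_s)`, `e_{r,s} ∈ ℕ`. -/
def cC (m : ℕ) (β : Wt m) : ℕ :=
  Nat.card {e : IdxLE m → ℕ // (∑ p, (e p : ℤ) • (eps p.1.1 + eps p.1.2)) = β}

/-- The number of ways to write `β = Σ_{1≤r<s≤m} e_{r,s} (ε_r + ε_s)`, `e_{r,s} ∈ ℕ`. -/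
def cD (m : ℕ) (β : Wt m) : ℕ :=
  Nat.card {e : IdxLT m → ℕ // (∑ p, (e p : ℤ) • (eps p.1.1 + eps p.1.2)) = β}

/-- The set `C_k^m`. -/
def setC (m k : ℕ) : Set (Wt m) :=
  {β | (∃ e : IdxLE m → ℕ, (∑ p, (e p : ℤ) • (eps p.1.1 + eps p.1.2)) = β) ∧
       wtSum β = 2 * k}

/-- The set `D_k^m`. -/
def setD (m k : ℕ) : Set (Wt m) :=
  {β | (∃ e : IdxLT m → ℕ, (∑ p, (e p : ℤ) • (eps p.1.1 + eps p.1.2)) = β) ∧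
       wtSum β = 2 * k}

-- ===== auxiliary lemmas for stmt17 =====

lemma castWt_inj {m : ℕ} : Function.Injective (castWt (m := m)) := by
  intro a b h
  funext i
  have := congrFun h i
  simpa [castWt] using this

lemma invI_invI {m : ℕ} (a : Wt m) : invI (invI a) = a := by
  funext i; simp [invI]

lemma invI_inj {m : ℕ} : Function.Injective (invI (m := m)) :=
  Function.Involutive.injective invI_invI

lemma invI_add {m : ℕ} (a b : Wt m) : invI (a + b) = invI a + invI b := by
  funext i; simp [invI]; ring

lemma invI_smul {m : ℕ} (c : ℤ) (a : Wt m) : invI (c • a) = c • invI a := by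
  funext i; simp [invI]

/-- `invI` as an additive hom. -/
def invIHom (m : ℕ) : Wt m →+ Wt m where
  toFun := invI
  map_zero' := by funext i; simp [invI]
  map_add' := invI_add

lemma invI_sum {m : ℕ} {ι : Type*} (s : Finset ι) (f : ι → Wt m) :
    invI (∑ i ∈ s, f i) = ∑ i ∈ s, invI (f i) := map_sum (invIHom m) f s

lemma sum_eps {m : ℕ} (a : Fin m) : (∑ j, eps a j) = 1 := by
  simp [eps]

lemma PqPS_zero_of_neg_sum {m : ℕ} {ι : Type} [Fintype ι] (v : ι → Wt m) (β : QWt m)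
    (hv : ∀ i, 0 ≤ ∑ j, v i j) (hβ : ∑ j, β j < 0) : PqPS v β = 0 := by
  unfold PqPS
  apply PowerSeries.ext
  intro d
  rw [PowerSeries.coeff_mk, map_zero]
  have hE : IsEmpty {n : ι → ℕ // (∑ i, n i) = d ∧ castWt (∑ i, (n i : ℤ) • v i) = β} := by
    constructor
    rintro ⟨nn, hs, hc⟩
    have hb : ∑ j, β j = ∑ i, (nn i : ℚ) * (∑ j, (v i j : ℚ)) := by
      rw [← hc]
      have : ∀ j, castWt (∑ i, (nn i : ℤ) • v i) j = ∑ i, (nn i : ℚ) * (v i j : ℚ) := by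
        intro j
        simp only [castWt, Finset.sum_apply, Pi.smul_apply, smul_eq_mul]
        push_cast
        rfl
      rw [Finset.sum_congr rfl fun j _ => this j, Finset.sum_comm]
      exact Finset.sum_congr rfl fun i _ => (Finset.mul_sum _ _ _).symm
    have hpos : 0 ≤ ∑ j, β j := by
      rw [hb]
      apply Finset.sum_nonneg
      intro i _
      apply mul_nonneg (by positivity)
      have h1 := hv i
      have h2 : (0 : ℚ) ≤ ((∑ j, v i j : ℤ) : ℚ) := by exact_mod_cast h1
      rw [Int.cast_sum] at h2
      exact h2
    exact absurd hβ (not_lt.mpr hpos)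
  simp [Nat.card_of_isEmpty]

lemma PqPS_invI {m : ℕ} {ι ι' : Type} [Fintype ι] [Fintype ι']
    (vf : ι → Wt m) (r : ι' → Wt m) (e : ι ≃ ι') (he : ∀ i, r (e i) = invI (vf i))
    (β : Wt m) : PqPS r (castWt (invI β)) = PqPS vf (castWt β) := by
  unfold PqPS
  apply PowerSeries.ext
  intro d
  rw [PowerSeries.coeff_mk, PowerSeries.coeff_mk]
  congr 1
  apply Nat.card_congr
  refine Equiv.subtypeEquiv (Equiv.arrowCongr e.symm (Equiv.refl ℕ)) (fun n' => ?_)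
  have hEfun : ∀ i, (Equiv.arrowCongr e.symm (Equiv.refl ℕ)) n' i = n' (e i) := fun _ => rfl
  have key : invI (∑ i', (n' i' : ℤ) • r i') = ∑ i, (n' (e i) : ℤ) • vf i := by
    rw [invI_sum]
    rw [← Equiv.sum_comp e (fun i' => invI ((n' i' : ℤ) • r i'))]
    apply Finset.sum_congr rfl
    intro i _
    rw [he i, invI_smul, invI_invI]
  constructor
  · rintro ⟨h1, h2⟩
    refine ⟨by rw [← h1]; exact (Equiv.sum_comp e (fun i' => n' i')), ?_⟩
    have h3 : (∑ i', (n' i' : ℤ) • r i') = invI β := castWt_inj h2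
    have h4 : invI (∑ i', (n' i' : ℤ) • r i') = β := by rw [h3, invI_invI]
    rw [key] at h4
    simp only [hEfun]
    rw [h4]
  · rintro ⟨h1, h2⟩
    simp only [hEfun] at h1 h2
    refine ⟨by rw [← h1]; exact (Equiv.sum_comp e (fun i' => n' i')).symm, ?_⟩
    have h4 : ∑ i, (n' (e i) : ℤ) • vf i = β := castWt_inj h2
    rw [← key] at h4
    rw [← invI_inj.eq_iff, invI_invI] at h4
    rw [h4]
-- ===== rev equivs and root matchings =====

def revLT (m : ℕ) : IdxLT m ≃ IdxLT m where
  toFun p := ⟨(p.1.2.rev, p.1.1.rev), by simpa [Fin.rev_lt_rev] using p.2⟩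
  invFun p := ⟨(p.1.2.rev, p.1.1.rev), by simpa [Fin.rev_lt_rev] using p.2⟩
  left_inv p := by ext <;> simp
  right_inv p := by ext <;> simp

def revLE (m : ℕ) : IdxLE m ≃ IdxLE m where
  toFun p := ⟨(p.1.2.rev, p.1.1.rev), by simpa [Fin.rev_le_rev] using p.2⟩
  invFun p := ⟨(p.1.2.rev, p.1.1.rev), by simpa [Fin.rev_le_rev] using p.2⟩
  left_inv p := by ext <;> simp
  right_inv p := by ext <;> simp

lemma invI_neg {m : ℕ} (a : Wt m) : invI (-a) = -invI a := by funext i; simp [invI]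

lemma invI_sub {m : ℕ} (a b : Wt m) : invI (a - b) = invI a - invI b := by
  funext i; simp [invI]; ring

lemma invI_eps {m : ℕ} (a : Fin m) : invI (eps a) = -eps a.rev := by
  funext i
  simp only [invI, eps, Pi.neg_apply, Fin.rev_eq_iff]

lemma rootsD_matches {m : ℕ} (i : IdxLT m ⊕ IdxLT m) :
    rootsD m ((Equiv.sumCongr (revLT m) (revLT m)) i) = invI (vfSmall m i) := by
  rcases i with p | p <;>
    simp only [Equiv.sumCongr_apply, Sum.map_inl, Sum.map_inr, rootsD, vfSmall, revLT,
      Equiv.coe_fn_mk, invI_sub, invI_neg, invI_add, invI_eps] <;> abel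

lemma rootsC_matches {m : ℕ} (i : IdxLT m ⊕ IdxLE m) :
    rootsC m ((Equiv.sumCongr (revLT m) (revLE m)) i) = invI (vfBig m i) := by
  rcases i with p | p <;>
    simp only [Equiv.sumCongr_apply, Sum.map_inl, Sum.map_inr, rootsC, vfBig, revLT, revLE,
      Equiv.coe_fn_mk, invI_sub, invI_neg, invI_add, invI_eps] <;> abel

lemma sum_rootsD {m : ℕ} (i : IdxLT m ⊕ IdxLT m) : 0 ≤ ∑ j, rootsD m i j := by
  rcases i with p | p <;>
    simp [rootsD, Finset.sum_add_distrib, Finset.sum_sub_distrib, sum_eps]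

lemma sum_rootsC {m : ℕ} (i : IdxLT m ⊕ IdxLE m) : 0 ≤ ∑ j, rootsC m i j := by
  rcases i with p | p <;>
    simp [rootsC, Finset.sum_add_distrib, Finset.sum_sub_distrib, sum_eps]
-- ===== signed permutation helpers =====

def conjRev {m : ℕ} (σ : Equiv.Perm (Fin m)) : Equiv.Perm (Fin m) :=
  (Fin.revPerm).trans (σ.trans Fin.revPerm)

lemma conjRev_apply {m : ℕ} (σ : Equiv.Perm (Fin m)) (x : Fin m) :
    conjRev σ x = (σ x.rev).rev := rfl

lemma conjRev_eq_mul {m : ℕ} (σ : Equiv.Perm (Fin m)) :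
    conjRev σ = Fin.revPerm * σ * Fin.revPerm := by
  ext x; rfl

lemma conjRev_involutive {m : ℕ} : Function.Involutive (conjRev (m := m)) := by
  intro σ; ext x; simp [conjRev_apply]

lemma sign_conjRev {m : ℕ} (σ : Equiv.Perm (Fin m)) :
    Equiv.Perm.sign (conjRev σ) = Equiv.Perm.sign σ := by
  rw [conjRev_eq_mul, Equiv.Perm.sign_mul, Equiv.Perm.sign_mul]
  rcases Int.units_eq_one_or (Equiv.Perm.sign (Fin.revPerm (n := m))) with h | h <;>
    simp [h]

lemma conjRev_symm {m : ℕ} (σ : Equiv.Perm (Fin m)) :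
    (conjRev σ).symm = conjRev σ.symm := by
  ext x
  have : conjRev σ ((conjRev σ.symm) x) = x := by
    simp [conjRev_apply]
  have h2 := congrArg (conjRev σ).symm this
  rw [Equiv.symm_apply_apply] at h2
  rw [h2]

lemma conjRev_symm_rev {m : ℕ} (σ : Equiv.Perm (Fin m)) (i : Fin m) :
    (conjRev σ).symm i.rev = (σ.symm i).rev := by
  rw [conjRev_symm, conjRev_apply, Fin.rev_rev]

lemma sum_sact {m : ℕ} (σ : Equiv.Perm (Fin m)) (ε : Fin m → Bool) (V : QWt m) :
    ∑ i, sact σ ε V i =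
      ∑ j, V j - 2 * ∑ i ∈ Finset.univ.filter (fun i => ε i = true), V (σ.symm i) := by
  have h1 : ∀ i, sact σ ε V i
      = V (σ.symm i) - 2 * (if ε i = true then V (σ.symm i) else 0) := by
    intro i; by_cases h : ε i <;> simp [sact, h] <;> ring
  rw [Finset.sum_congr rfl fun i _ => h1 i, Finset.sum_sub_distrib]
  congr 1
  · exact Equiv.sum_comp σ.symm V
  · rw [Finset.mul_sum, Finset.sum_filter]
    apply Finset.sum_congr rfl
    intro x _
    by_cases h : ε x <;> simp [h]

lemma allowed_false {m : ℕ} (g : RT) : allowed g (fun _ : Fin m => false) := by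
  intro _; simp

lemma two_le_card_of_allowedD {m : ℕ} (ε : Fin m → Bool) (hε : allowed RT.D ε)
    (hne : ε ≠ fun _ => false) :
    2 ≤ (Finset.univ.filter fun i => ε i = true).card := by
  have hprod : (∏ i, (if ε i then (-1 : ℤ) else 1))
      = (-1 : ℤ) ^ (Finset.univ.filter fun i => ε i = true).card := by
    rw [Finset.prod_ite (fun _ => (-1 : ℤ)) (fun _ => (1 : ℤ))]
    simp
  have h1 := hε rfl
  rw [hprod] at h1
  have heven : Even (Finset.univ.filter fun i => ε i = true).card :=
    (neg_one_pow_eq_one_iff_even (by norm_num : (-1 : ℤ) ≠ 1)).mp h1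
  have hpos : 0 < (Finset.univ.filter fun i => ε i = true).card := by
    rw [Finset.card_pos]
    rcases Function.ne_iff.mp hne with ⟨i, hi⟩
    exact ⟨i, by simpa using hi⟩
  rcases heven with ⟨t, ht⟩
  omega

lemma one_le_card_of_ne_false {m : ℕ} (ε : Fin m → Bool) (hne : ε ≠ fun _ => false) :
    1 ≤ (Finset.univ.filter fun i => ε i = true).card := by
  rw [Nat.one_le_iff_ne_zero, ← Nat.pos_iff_ne_zero, Finset.card_pos]
  rcases Function.ne_iff.mp hne with ⟨i, hi⟩
  exact ⟨i, by simpa using hi⟩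

lemma rev_val_int {m : ℕ} (j : Fin m) : ((j.rev : ℕ) : ℤ) = (m : ℤ) - 1 - (j : ℕ) := by
  have h1 := j.isLt
  simp only [Fin.rev]
  omega
-- ===== the main argument identity and master lemma =====

lemma sact_false_arg {m : ℕ} (g : RT)
    (hrho : ∀ a b : Fin m, rhoG g m a - rhoG g m b = ((b : ℕ) : ℚ) - ((a : ℕ) : ℚ))
    (ν η : Wt m) (n k : ℤ) (σ : Equiv.Perm (Fin m)) :
    sact σ (fun _ => false) (castWt (hatP n ν + k • kappa m) + rhoG g m)
        - (castWt (hatP n η + k • kappa m) + rhoG g m)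
      = castWt (invI (pact (conjRev σ) (ν + rhoZ m) - η - rhoZ m)) := by
  funext i
  have hsymm : (conjRev σ).symm i.rev = (σ.symm i).rev := conjRev_symm_rev σ i
  have hρ := hrho (σ.symm i) i
  have hr1 := rev_val_int (σ.symm i)
  have hr2 := rev_val_int i
  simp only [sact, Pi.sub_apply, Pi.add_apply, castWt, hatP, Pi.smul_apply, kappa,
    smul_eq_mul, mul_one, invI, pact, Function.comp_apply, rhoZ, Bool.false_eq_true,
    if_false, one_mul, hsymm]
  push_cast
  have hq1 : (((σ.symm i).rev : ℕ) : ℚ) = (m : ℚ) - 1 - ((σ.symm i : ℕ) : ℚ) := by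
    exact_mod_cast congrArg (fun z : ℤ => (z : ℚ)) hr1
  have hq2 : ((i.rev : ℕ) : ℚ) = (m : ℚ) - 1 - ((i : ℕ) : ℚ) := by
    exact_mod_cast congrArg (fun z : ℤ => (z : ℚ)) hr2
  rw [hq1, hq2]
  linarith [hρ]

lemma master {m : ℕ} {ι ι' : Type} [Fintype ι] [Fintype ι']
    (g : RT) (vf : ι → Wt m) (r : ι' → Wt m)
    (hPqG : ∀ β : QWt m, PqG g β = PqPS r β)
    (e : ι ≃ ι') (he : ∀ i, r (e i) = invI (vf i))
    (hrho : ∀ a b : Fin m, rhoG g m a - rhoG g m b = ((b : ℕ) : ℚ) - ((a : ℕ) : ℚ))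
    (ν η : Wt m) (n k : ℤ)
    (hvanish : ∀ (σ : Equiv.Perm (Fin m)) (ε : Fin m → Bool), allowed g ε →
      ε ≠ (fun _ => false) →
      PqG g (sact σ ε (castWt (hatP n ν + k • kappa m) + rhoG g m)
        - (castWt (hatP n η + k • kappa m) + rhoG g m)) = 0) :
    (∑ σ : Equiv.Perm (Fin m), (Equiv.Perm.sign σ : ℤ) •
        PqPS vf (castWt (pact σ (ν + rhoZ m) - η - rhoZ m)))
      = KF g (castWt (hatP n ν + k • kappa m)) (castWt (hatP n η + k • kappa m)) := by
  unfold KF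
  have hmem : (fun _ : Fin m => false) ∈ Finset.univ.filter (allowed g) :=
    Finset.mem_filter.mpr ⟨Finset.mem_univ _, allowed_false g⟩
  have step1 : ∀ σ : Equiv.Perm (Fin m),
      (∑ ε ∈ Finset.univ.filter (allowed g), ssign σ ε •
        PqG g (sact σ ε (castWt (hatP n ν + k • kappa m) + rhoG g m)
          - (castWt (hatP n η + k • kappa m) + rhoG g m)))
      = (Equiv.Perm.sign σ : ℤ) •
          PqPS vf (castWt (pact (conjRev σ) (ν + rhoZ m) - η - rhoZ m)) := by
    intro σ
    rw [Finset.sum_eq_single_of_mem (fun _ => false) hmem ?side]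
    case side =>
      intro ε hε hne
      rw [hvanish σ ε (Finset.mem_filter.mp hε).2 hne, smul_zero]
    rw [sact_false_arg g hrho ν η n k σ, hPqG,
      PqPS_invI vf r e he (pact (conjRev σ) (ν + rhoZ m) - η - rhoZ m)]
    congr 1
    simp [ssign]
  rw [Finset.sum_congr rfl fun σ _ => step1 σ]
  exact (Fintype.sum_equiv (Function.Involutive.toPerm _ conjRev_involutive)
    (fun σ => (Equiv.Perm.sign σ : ℤ) •
      PqPS vf (castWt (pact (conjRev σ) (ν + rhoZ m) - η - rhoZ m)))
    (fun σ => (Equiv.Perm.sign σ : ℤ) •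
      PqPS vf (castWt (pact σ (ν + rhoZ m) - η - rhoZ m)))
    (fun σ => by
      show _ = (Equiv.Perm.sign (conjRev σ) : ℤ) •
        PqPS vf (castWt (pact (conjRev σ) (ν + rhoZ m) - η - rhoZ m))
      rw [sign_conjRev])).symm
-- ===== vanishing lemmas =====

lemma vanish_gen {m : ℕ} {ι' : Type} [Fintype ι'] (g : RT) (r : ι' → Wt m)
    (hPqG : ∀ β : QWt m, PqG g β = PqPS r β) (hr : ∀ i, 0 ≤ ∑ j, r i j)
    (ν η : Wt m) (n k : ℤ)
    (hsum : ((wtSum η : ℤ) : ℚ) - ((wtSum ν : ℤ) : ℚ) ≤ 2 * k)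
    (σ : Equiv.Perm (Fin m)) (ε : Fin m → Bool)
    (hT : (k : ℚ) + 1 ≤ ∑ i ∈ Finset.univ.filter (fun i => ε i = true),
        (castWt (hatP n ν + k • kappa m) + rhoG g m) (σ.symm i)) :
    PqG g (sact σ ε (castWt (hatP n ν + k • kappa m) + rhoG g m)
      - (castWt (hatP n η + k • kappa m) + rhoG g m)) = 0 := by
  set V : QWt m := castWt (hatP n ν + k • kappa m) + rhoG g m with hV
  set U : QWt m := castWt (hatP n η + k • kappa m) + rhoG g m with hU
  rw [hPqG]
  apply PqPS_zero_of_neg_sum r _ hr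
  have hsplit : ∑ i, (sact σ ε V - U) i
      = (∑ j, V j - ∑ j, U j)
        - 2 * ∑ i ∈ Finset.univ.filter (fun i => ε i = true), V (σ.symm i) := by
    rw [show (∑ i, (sact σ ε V - U) i) = ∑ i, sact σ ε V i - ∑ i, U i by
      rw [← Finset.sum_sub_distrib]; rfl, sum_sact]
    ring
  have hVU : ∑ j, V j - ∑ j, U j = ((wtSum η : ℤ) : ℚ) - ((wtSum ν : ℤ) : ℚ) := by
    rw [← Finset.sum_sub_distrib]
    have hterm : ∀ j, V j - U j = ((η j.rev : ℤ) : ℚ) - ((ν j.rev : ℤ) : ℚ) := by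
      intro j
      simp only [hV, hU, Pi.add_apply, castWt, hatP, Pi.smul_apply, kappa, smul_eq_mul,
        mul_one]
      push_cast
      ring
    rw [Finset.sum_congr rfl fun j _ => hterm j]
    rw [show (∑ j : Fin m, (((η j.rev : ℤ) : ℚ) - ((ν j.rev : ℤ) : ℚ)))
        = ∑ j : Fin m, (((η j : ℤ) : ℚ) - ((ν j : ℤ) : ℚ)) from
      Equiv.sum_comp (Fin.revPerm) (fun j => ((η j : ℤ) : ℚ) - ((ν j : ℤ) : ℚ))]
    rw [Finset.sum_sub_distrib]
    unfold wtSum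
    push_cast
    rfl
  rw [hsplit, hVU]
  linarith [hsum, hT]

lemma vanish_D {m : ℕ} (ν η : Wt m) (n k : ℤ)
    (hν : ∀ j, ν j ≤ n) (hk : 0 ≤ k)
    (hsum : ((wtSum η : ℤ) : ℚ) - ((wtSum ν : ℤ) : ℚ) ≤ 2 * k)
    (σ : Equiv.Perm (Fin m)) (ε : Fin m → Bool) (hε : allowed RT.D ε)
    (hne : ε ≠ fun _ => false) :
    PqG RT.D (sact σ ε (castWt (hatP n ν + k • kappa m) + rhoG RT.D m)
      - (castWt (hatP n η + k • kappa m) + rhoG RT.D m)) = 0 := by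
  apply vanish_gen RT.D (rootsD m) (fun _ => rfl) sum_rootsD ν η n k hsum σ ε
  set T := Finset.univ.filter (fun i => ε i = true) with hTdef
  set V : QWt m := castWt (hatP n ν + k • kappa m) + rhoG RT.D m with hVdef
  have hcard : 2 ≤ T.card := two_le_card_of_allowedD ε hε hne
  -- lower bound for each entry of V
  have hVlow : ∀ j : Fin m, (k : ℚ) + ((m : ℚ) - 1 - ((j : ℕ) : ℚ)) ≤ V j := by
    intro j
    have h1 : ((ν j.rev : ℤ) : ℚ) ≤ ((n : ℤ) : ℚ) := by exact_mod_cast hν j.rev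
    simp only [hVdef, Pi.add_apply, castWt, hatP, Pi.smul_apply, kappa, smul_eq_mul,
      mul_one, rhoG]
    push_cast
    linarith
  have hw0 : ∀ j : Fin m, (0 : ℚ) ≤ (m : ℚ) - 1 - ((j : ℕ) : ℚ) := by
    intro j
    have := j.isLt
    have h2 : ((j : ℕ) : ℚ) + 1 ≤ (m : ℚ) := by exact_mod_cast this
    linarith
  -- there are two distinct elements in T, and at least one has σ.symm-image of val ≤ m-2
  obtain ⟨i₁, hi₁, i₂, hi₂, hne12⟩ := Finset.one_lt_card.mp (by omega : 1 < T.card)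
  have hdist : σ.symm i₁ ≠ σ.symm i₂ := fun h => hne12 (σ.symm.injective h)
  have hexists : ∃ i ∈ T, ((σ.symm i : ℕ) : ℚ) ≤ (m : ℚ) - 2 := by
    have hvne : ((σ.symm i₁ : Fin m) : ℕ) ≠ ((σ.symm i₂ : Fin m) : ℕ) :=
      fun h => hdist (Fin.ext h)
    have hlt1 := (σ.symm i₁).isLt
    have hlt2 := (σ.symm i₂).isLt
    rcases lt_or_gt_of_ne hvne with h | h
    · refine ⟨i₁, hi₁, ?_⟩
      have : ((σ.symm i₁ : Fin m) : ℕ) + 2 ≤ m := by omega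
      have := (Nat.cast_le (α := ℚ)).mpr this
      push_cast at this
      linarith
    · refine ⟨i₂, hi₂, ?_⟩
      have : ((σ.symm i₂ : Fin m) : ℕ) + 2 ≤ m := by omega
      have := (Nat.cast_le (α := ℚ)).mpr this
      push_cast at this
      linarith
  obtain ⟨i₀, hi₀, hi₀v⟩ := hexists
  -- sum bound
  have hsumw : (1 : ℚ) ≤ ∑ i ∈ T, ((m : ℚ) - 1 - ((σ.symm i : ℕ) : ℚ)) := by
    have h1 : (1 : ℚ) ≤ (m : ℚ) - 1 - ((σ.symm i₀ : ℕ) : ℚ) := by linarith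
    calc (1 : ℚ) ≤ (m : ℚ) - 1 - ((σ.symm i₀ : ℕ) : ℚ) := h1
    _ ≤ ∑ i ∈ T, ((m : ℚ) - 1 - ((σ.symm i : ℕ) : ℚ)) :=
        Finset.single_le_sum (fun i _ => hw0 (σ.symm i)) hi₀
  have hsumk : (2 : ℚ) * k ≤ ∑ _i ∈ T, (k : ℚ) := by
    rw [Finset.sum_const, nsmul_eq_mul]
    have : (2 : ℚ) ≤ (T.card : ℚ) := by exact_mod_cast hcard
    have hk' : (0 : ℚ) ≤ (k : ℚ) := by exact_mod_cast hk
    nlinarith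
  have htot : (2 : ℚ) * k + 1 ≤ ∑ i ∈ T, V (σ.symm i) := by
    have hstep : ∑ i ∈ T, ((k : ℚ) + ((m : ℚ) - 1 - ((σ.symm i : ℕ) : ℚ)))
        ≤ ∑ i ∈ T, V (σ.symm i) :=
      Finset.sum_le_sum (fun i _ => hVlow (σ.symm i))
    rw [Finset.sum_add_distrib] at hstep
    linarith
  have hk' : (0 : ℚ) ≤ (k : ℚ) := by exact_mod_cast hk
  linarith

lemma vanish_C {m : ℕ} (ν η : Wt m) (n k : ℤ)
    (hν : ∀ j, ν j ≤ n) (hk : 0 ≤ k)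
    (hsum : ((wtSum η : ℤ) : ℚ) - ((wtSum ν : ℤ) : ℚ) ≤ 2 * k)
    (σ : Equiv.Perm (Fin m)) (ε : Fin m → Bool) (hε : allowed RT.C ε)
    (hne : ε ≠ fun _ => false) :
    PqG RT.C (sact σ ε (castWt (hatP n ν + k • kappa m) + rhoG RT.C m)
      - (castWt (hatP n η + k • kappa m) + rhoG RT.C m)) = 0 := by
  apply vanish_gen RT.C (rootsC m) (fun _ => rfl) sum_rootsC ν η n k hsum σ ε
  set T := Finset.univ.filter (fun i => ε i = true) with hTdef
  set V : QWt m := castWt (hatP n ν + k • kappa m) + rhoG RT.C m with hVdef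
  have hcard : 1 ≤ T.card := one_le_card_of_ne_false ε hne
  have hVlow : ∀ j : Fin m, (k : ℚ) + 1 ≤ V j := by
    intro j
    have h1 : ((ν j.rev : ℤ) : ℚ) ≤ ((n : ℤ) : ℚ) := by exact_mod_cast hν j.rev
    have h2 : ((j : ℕ) : ℚ) + 1 ≤ (m : ℚ) := by exact_mod_cast j.isLt
    simp only [hVdef, Pi.add_apply, castWt, hatP, Pi.smul_apply, kappa, smul_eq_mul,
      mul_one, rhoG]
    push_cast
    linarith
  have hk' : (0 : ℚ) ≤ (k : ℚ) := by exact_mod_cast hk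
  obtain ⟨i₀, hi₀⟩ := Finset.card_pos.mp (by omega : 0 < T.card)
  calc (k : ℚ) + 1 ≤ V (σ.symm i₀) := hVlow (σ.symm i₀)
  _ ≤ ∑ i ∈ T, V (σ.symm i) :=
      Finset.single_le_sum (fun i _ => le_trans (by linarith) (hVlow (σ.symm i))) hi₀
-- ===== conjugate partition counting =====

lemma card_filter_fin_lt {m : ℕ} {c : ℤ} (h0 : 0 ≤ c) (hm : c ≤ (m : ℤ)) :
    (((Finset.univ.filter fun j : Fin m => ((j : ℕ) : ℤ) < c)).card : ℤ) = c := by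
  have ht : c.toNat ≤ m := by omega
  have hset : (Finset.univ.filter fun j : Fin m => ((j : ℕ) : ℤ) < c)
      = Finset.map (Fin.castLEEmb ht) Finset.univ := by
    ext j
    simp only [Finset.mem_filter, Finset.mem_univ, true_and, Finset.mem_map,
      Finset.mem_univ, true_and]
    constructor
    · intro h
      have hj : (j : ℕ) < c.toNat := by omega
      exact ⟨⟨(j : ℕ), hj⟩, by ext; simp [Fin.castLEEmb, Fin.castLE]⟩
    · rintro ⟨i, rfl⟩
      have h1 := i.isLt
      have h2 : ((Fin.castLEEmb ht i : Fin m) : ℕ) = (i : ℕ) := rfl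
      rw [h2]
      omega
  rw [hset, Finset.card_map, Finset.card_univ, Fintype.card_fin]
  omega

lemma wtSum_conj {l m : ℕ} (lam : Wt l) (h0 : ∀ i, 0 ≤ lam i)
    (hm : ∀ i, lam i ≤ (m : ℤ)) : wtSum (conj m lam) = wtSum lam := by
  unfold wtSum conj
  have step : ∀ j : Fin m,
      (((Finset.univ.filter fun i : Fin l => ((j : ℕ) : ℤ) < lam i)).card : ℤ)
      = ∑ i : Fin l, (if ((j : ℕ) : ℤ) < lam i then (1 : ℤ) else 0) := by
    intro j
    rw [Finset.card_filter]
    push_cast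
    apply Finset.sum_congr rfl
    intro i _
    split <;> simp
  rw [Finset.sum_congr rfl fun j _ => step j, Finset.sum_comm]
  apply Finset.sum_congr rfl
  intro i _
  rw [← Finset.sum_filter]
  simpa using card_filter_fin_lt (h0 i) (hm i)

lemma conj_le_card {l m : ℕ} (lam : Wt l) (j : Fin m) :
    conj m lam j ≤ ((Finset.univ.filter fun i : Fin l => 0 < lam i).card : ℤ) := by
  unfold conj
  have : (Finset.univ.filter fun i : Fin l => ((j : ℕ) : ℤ) < lam i)
      ⊆ Finset.univ.filter fun i : Fin l => 0 < lam i := by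
    apply Finset.monotone_filter_right
    intro i hi
    have h0j : (0 : ℤ) ≤ ((j : ℕ) : ℤ) := by positivity
    omega
  exact_mod_cast Finset.card_le_card this

lemma rhoG_diff (g : RT) (hg : g = RT.C ∨ g = RT.D) {m : ℕ} (a b : Fin m) :
    rhoG g m a - rhoG g m b = ((b : ℕ) : ℚ) - ((a : ℕ) : ℚ) := by
  rcases hg with rfl | rfl <;> (intros; simp [rhoG]; try ring)


/-- (Second duality theorem.) For partitions `λ, μ` of length `l`
with `l ≥ |μ| ≥ |λ|`, `m = max(λ_1, μ_1)`, conjugates `λ', μ'` regarded as partitions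
of length `m`, `n = max(λ'_1, μ'_1)`, `λ̃ = (n-λ'_m,…,n-λ'_1)`,
`μ̃ = (n-μ'_m,…,n-μ'_1)` and any integer `k ≥ (|μ|-|λ|)/2`:
`v_{λ,μ}(q) = u_{λ',μ'}(q) = K^{D_m}_{λ̃+kκ_m, μ̃+kκ_m}(q)` and
`V_{λ,μ}(q) = U_{λ',μ'}(q) = K^{C_m}_{λ̃+kκ_m, μ̃+kκ_m}(q)`. -/
theorem stmt17 (l : ℕ) (hl : 1 ≤ l) (lam mu : Wt l) (hlam : IsPart lam) (hmu : IsPart mu)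
    (hone : wtSum lam ≤ wtSum mu) (htwo : wtSum mu ≤ (l : ℤ))
    (m : ℕ) (hm : (m : ℤ) = max (lam ⟨0, hl⟩) (mu ⟨0, hl⟩))
    (n : ℤ)
    (hn : n = max ((Finset.univ.filter (fun i : Fin l => 0 < lam i)).card : ℤ)
              ((Finset.univ.filter (fun i : Fin l => 0 < mu i)).card : ℤ))
    (k : ℤ) (hk : wtSum mu - wtSum lam ≤ 2 * k) :
    uP (conj m lam) (conj m mu) =
      KF RT.D (castWt (hatP n (conj m lam) + k • kappa m))
              (castWt (hatP n (conj m mu) + k • kappa m)) ∧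
    UP (conj m lam) (conj m mu) =
      KF RT.C (castWt (hatP n (conj m lam) + k • kappa m))
              (castWt (hatP n (conj m mu) + k • kappa m)) := by
  have hk0 : 0 ≤ k := by linarith
  -- entry bounds of the original partitions
  have hlam_le : ∀ i, lam i ≤ (m : ℤ) := by
    intro i
    have h1 : lam i ≤ lam ⟨0, hl⟩ := hlam.1 (by simp [Fin.le_def])
    have h2 : lam ⟨0, hl⟩ ≤ max (lam ⟨0, hl⟩) (mu ⟨0, hl⟩) := le_max_left _ _
    omega
  have hmu_le : ∀ i, mu i ≤ (m : ℤ) := by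
    intro i
    have h1 : mu i ≤ mu ⟨0, hl⟩ := hmu.1 (by simp [Fin.le_def])
    have h2 : mu ⟨0, hl⟩ ≤ max (lam ⟨0, hl⟩) (mu ⟨0, hl⟩) := le_max_right _ _
    omega
  -- sums of conjugates
  have hslam : wtSum (conj m lam) = wtSum lam := wtSum_conj lam hlam.2 hlam_le
  have hsmu : wtSum (conj m mu) = wtSum mu := wtSum_conj mu hmu.2 hmu_le
  have hsum : ((wtSum (conj m mu) : ℤ) : ℚ) - ((wtSum (conj m lam) : ℤ) : ℚ) ≤ 2 * k := by
    rw [hslam, hsmu]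
    exact_mod_cast by linarith
  -- conjugate entries bounded by n
  have hν : ∀ j : Fin m, conj m lam j ≤ n := by
    intro j
    have := conj_le_card lam j
    omega
  have hη : ∀ j : Fin m, conj m mu j ≤ n := by
    intro j
    have := conj_le_card mu j
    omega
  constructor
  · -- type D
    have hmain := master RT.D (vfSmall m) (rootsD m) (fun _ => rfl)
      (Equiv.sumCongr (revLT m) (revLT m)) rootsD_matches
      (rhoG_diff RT.D (Or.inr rfl))
      (conj m lam) (conj m mu) n k
      (fun σ ε hε hne => vanish_D (conj m lam) (conj m mu) n k hν hk0 hsum σ ε hε hne)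
    exact hmain
  · -- type C
    have hmain := master RT.C (vfBig m) (rootsC m) (fun _ => rfl)
      (Equiv.sumCongr (revLT m) (revLE m)) rootsC_matches
      (rhoG_diff RT.C (Or.inl rfl))
      (conj m lam) (conj m mu) n k
      (fun σ ε hε hne => vanish_C (conj m lam) (conj m mu) n k hν hk0 hsum σ ε hε hne)
    exact hmain

end
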